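/- Let F_q be a finite field of odd characteristic and let b, c in F_q with c ≠ 0. If -c is a non-zero square in F_q, then the polynomial (s-b)^2 + c has exactly two roots in F_q, and the number of s in F_q with (s-b)^2 + c a non-zero square is exactly (q-3)/2. -/

import Mathlib

/-- Over a finite field `F` of odd characteristic with `q` elements, `c ≠ 0`, if `-c` is a
non-zero square then `(s-b)² + c` has exactly two roots in `F`, and the number of `s` with
`(s-b)² + c` a non-zero square is `(q-3)/2`. -/
theorem stmt_4 (q : ℕ) (F : Type*) [Field F] [Fintype F]
    (hcard : Fintype.card F = q) (hchar : ringChar F ≠ 2)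
    (b c : F) (hc : c ≠ 0) (hsq : ∃ y : F, y ≠ 0 ∧ -c = y ^ 2) :
    Nat.card {s : F // (s - b) ^ 2 + c = 0} = 2 ∧
    Nat.card {s : F // ∃ y : F, y ≠ 0 ∧ (s - b) ^ 2 + c = y ^ 2} = (q - 3) / 2 := by
  classical
  obtain ⟨y₀, hy₀, hy₀sq⟩ := hsq
  have h2 : (2 : F) ≠ 0 := Ring.two_ne_zero hchar
  have hne : b + y₀ ≠ b - y₀ := by
    intro h
    exact absurd (by linear_combination h : (2:F) * y₀ = 0) (mul_ne_zero h2 hy₀)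
  constructor
  · -- roots part
    have hset : {s : F | (s - b) ^ 2 + c = 0} = {b + y₀, b - y₀} := by
      ext s
      simp only [Set.mem_setOf_eq, Set.mem_insert_iff, Set.mem_singleton_iff]
      constructor
      · intro h
        have : (s - (b + y₀)) * (s - (b - y₀)) = 0 := by linear_combination h + hy₀sq
        rcases mul_eq_zero.mp this with h' | h' <;> [left; right] <;> linear_combination h'
      · rintro (rfl | rfl) <;> linear_combination -hy₀sq
    have e : {s : F // (s - b) ^ 2 + c = 0} ≃ ({b + y₀, b - y₀} : Set F) :=
      Equiv.setCongr hset
    rw [Nat.card_congr e, Nat.card_coe_set_eq, Set.ncard_pair hne]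
  · -- count part
    set B : Finset (F × F) := Finset.univ.filter (fun p => p.1 ^ 2 + c = p.2 ^ 2) with hB
    have hcardB : B.card = q - 1 := by
      have : B.card = (Finset.univ.filter (fun u : F => u ≠ 0)).card := by
        apply Finset.card_nbij' (fun p => p.1 + p.2)
          (fun u => ((u - c * u⁻¹) / 2, (u + c * u⁻¹) / 2))
        · rintro ⟨x, y⟩ hp
          simp only [hB, Finset.mem_coe, Finset.mem_filter, Finset.mem_univ, true_and] at hp ⊢
          intro h
          exact hc (by linear_combination hp + (y - x) * h)
        · intro u hu
          simp only [Finset.mem_coe, Finset.mem_filter, Finset.mem_univ, true_and] at hu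
          simp only [hB, Finset.mem_coe, Finset.mem_filter, Finset.mem_univ, true_and]
          field_simp
          ring
        · rintro ⟨x, y⟩ hp
          simp only [hB, Finset.mem_coe, Finset.mem_filter, Finset.mem_univ, true_and] at hp
          have hxy : x + y ≠ 0 := by
            intro h
            exact hc (by linear_combination hp + (y - x) * h)
          have hcinv : c * (x + y)⁻¹ = y - x := by
            field_simp
            linear_combination hp
          simp only [Prod.mk.injEq]
          constructor
          · rw [hcinv]; field_simp; ring
          · rw [hcinv]; field_simp; ring
        · intro u hu
          simp only [Finset.mem_coe, Finset.mem_filter, Finset.mem_univ, true_and] at hu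
          field_simp
          ring
      rw [this]
      have : (Finset.univ.filter (fun u : F => u ≠ 0)) = Finset.univ \ {0} := by
        ext u; simp
      rw [this, Finset.card_sdiff_of_subset (by simp)]
      simp [hcard]
    have hcardB0 : (B.filter (fun p => p.2 = 0)).card = 2 := by
      have : B.filter (fun p => p.2 = 0) = {(y₀, 0), (-y₀, 0)} := by
        ext ⟨x, y⟩
        simp only [hB, Finset.filter_filter, Finset.mem_filter, Finset.mem_univ, true_and,
          Finset.mem_insert, Finset.mem_singleton, Prod.mk.injEq]
        constructor
        · rintro ⟨h, rfl⟩
          have : (x - y₀) * (x + y₀) = 0 := by linear_combination h + hy₀sq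
          rcases mul_eq_zero.mp this with h' | h' <;> [left; right] <;>
            exact ⟨by linear_combination h', rfl⟩
        · rintro (⟨rfl, rfl⟩ | ⟨rfl, rfl⟩) <;> exact ⟨by linear_combination -hy₀sq, rfl⟩
      rw [this, Finset.card_insert_of_notMem, Finset.card_singleton]
      simp only [Finset.mem_singleton, Prod.mk.injEq, not_and]
      intro h _
      exact absurd (by linear_combination h : (2:F) * y₀ = 0) (mul_ne_zero h2 hy₀)
    have hq3 : 3 ≤ q := by
      have h1 := Finset.card_filter_le B (fun p => p.2 = 0)
      have h0 : 0 < q := by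
        rw [← hcard]; exact Fintype.card_pos
      omega
    have hcardB1 : (B.filter (fun p => p.2 ≠ 0)).card = q - 3 := by
      have hsplit := Finset.card_filter_add_card_filter_not
        (s := B) (p := fun p => p.2 = 0)
      simp only [ne_eq]
      omega
    set A : Finset F := Finset.univ.filter (fun x : F => ∃ y : F, y ≠ 0 ∧ x ^ 2 + c = y ^ 2)
      with hA
    have hfiber : (B.filter (fun p => p.2 ≠ 0)).card = 2 * A.card := by
      rw [Finset.card_eq_sum_card_fiberwise (f := Prod.fst) (t := A)
        (by rintro ⟨x, y⟩ hp
            simp only [hB, Finset.mem_coe, Finset.filter_filter, Finset.mem_filter, Finset.mem_univ,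
              true_and] at hp
            simp only [hA, Finset.mem_coe, Finset.mem_filter, Finset.mem_univ, true_and]
            exact ⟨y, hp.2, hp.1⟩)]
      rw [Finset.sum_congr rfl (g := fun _ => 2), Finset.sum_const, smul_eq_mul, mul_comm]
      intro x hx
      simp only [hA, Finset.mem_filter, Finset.mem_univ, true_and] at hx
      obtain ⟨y₁, hy₁, hy₁sq⟩ := hx
      have : ((B.filter (fun p => p.2 ≠ 0)).filter (fun p => p.1 = x))
          = {(x, y₁), (x, -y₁)} := by
        ext ⟨a, y⟩
        simp only [hB, Finset.filter_filter, Finset.mem_filter, Finset.mem_univ, true_and,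
          Finset.mem_insert, Finset.mem_singleton, Prod.mk.injEq]
        constructor
        · rintro ⟨⟨h, hy⟩, rfl⟩
          have : (y - y₁) * (y + y₁) = 0 := by linear_combination hy₁sq - h
          rcases mul_eq_zero.mp this with h' | h' <;> [left; right] <;>
            exact ⟨rfl, by linear_combination h'⟩
        · rintro (⟨rfl, rfl⟩ | ⟨rfl, rfl⟩)
          · exact ⟨⟨hy₁sq, hy₁⟩, rfl⟩
          · exact ⟨⟨by linear_combination hy₁sq, neg_ne_zero.mpr hy₁⟩, rfl⟩
      rw [this, Finset.card_insert_of_notMem, Finset.card_singleton]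
      simp only [Finset.mem_singleton, Prod.mk.injEq, not_and]
      intro _ h
      exact absurd (by linear_combination h : (2:F) * y₁ = 0) (mul_ne_zero h2 hy₁)
    have hAcard : A.card = (q - 3) / 2 := by omega
    have e : {s : F // ∃ y : F, y ≠ 0 ∧ (s - b) ^ 2 + c = y ^ 2}
        ≃ {x : F // ∃ y : F, y ≠ 0 ∧ x ^ 2 + c = y ^ 2} :=
      Equiv.subtypeEquiv (Equiv.subRight b) (fun s => by simp [Equiv.subRight])
    rw [Nat.card_congr e, Nat.card_eq_fintype_card, Fintype.card_subtype]
    exact hAcard
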